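/- Let Z be a symmetric n×n matrix of rank d with smallest nonzero eigenvalue magnitude |γ_d(Z)|, and E a symmetric n×n matrix with |γ_d(Z)| > 3‖E‖₂. Let V and Ṽ be the matrices of the top-d eigenvectors of Z and Z + E respectively. Then ‖sin Θ(V, Ṽ)‖₂ ≤ ‖E‖₂ / (|γ_d(Z)| - 3‖E‖₂). -/

import Mathlib

open Matrix

/-- Spectral (operator) norm of a square real matrix. -/
noncomputable def opNorm {n : ℕ} (A : Matrix (Fin n) (Fin n) ℝ) : ℝ :=
  ‖Matrix.toEuclideanCLM (𝕜 := ℝ) (n := Fin n) A‖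

/-- Singular values of a real matrix (square roots of the eigenvalues of `AᵀA`). -/
noncomputable def singvals {m k : ℕ} (A : Matrix (Fin m) (Fin k) ℝ) : Fin k → ℝ :=
  fun i => Real.sqrt ((show (Aᵀ * A).IsHermitian by
    simpa using Matrix.isHermitian_conjTranspose_mul_self A).eigenvalues i)

/-- The `sin Θ` matrix of two `n×d` matrices with orthonormal columns: the diagonal matrix
with entries `sin(arccos(σᵢ))` for `σᵢ` the singular values of `VᵀV'`. -/
noncomputable def sinTheta {n d : ℕ} (V V' : Matrix (Fin n) (Fin d) ℝ) :
    Matrix (Fin d) (Fin d) ℝ :=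
  Matrix.diagonal (fun i => Real.sin (Real.arccos (singvals (Vᵀ * V') i)))

open scoped Matrix.Norms.L2Operator

set_option maxHeartbeats 1600000

namespace STAux

variable {m n k : ℕ}

noncomputable def wr {n : ℕ} (v : Fin n → ℝ) : EuclideanSpace ℝ (Fin n) :=
  (EuclideanSpace.equiv (Fin n) ℝ).symm v

lemma wr_uw (x : EuclideanSpace ℝ (Fin n)) : wr (fun i => x i) = x := rfl

lemma norm_wr (v : Fin n → ℝ) : ‖wr v‖ = Real.sqrt (∑ i, (v i)^2) := by
  rw [EuclideanSpace.norm_eq]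
  simp [wr, Real.norm_eq_abs, sq_abs]

lemma norm_wr_le_of_sq_le {v w : Fin n → ℝ} (h : ∀ i, (v i)^2 ≤ (w i)^2) :
    ‖wr v‖ ≤ ‖wr w‖ := by
  rw [norm_wr, norm_wr]
  exact Real.sqrt_le_sqrt (Finset.sum_le_sum fun i _ => h i)

lemma norm_smul_wr (t : ℝ) (v : Fin n → ℝ) : ‖wr (t • v)‖ = |t| * ‖wr v‖ := by
  have : wr (t • v) = t • wr v := rfl
  rw [this, norm_smul, Real.norm_eq_abs]

lemma norm_wr_mulVec_le (A : Matrix (Fin m) (Fin n) ℝ) (x : EuclideanSpace ℝ (Fin n)) :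
    ‖wr (A *ᵥ x)‖ ≤ ‖A‖ * ‖x‖ :=
  Matrix.l2_opNorm_mulVec A x

/-- eigen-bound: if `A *ᵥ w = t • w` with `w ≠ 0` then `|t| ≤ ‖A‖`. -/
lemma abs_le_norm_of_mulVec_eq (A : Matrix (Fin n) (Fin n) ℝ) (w : EuclideanSpace ℝ (Fin n))
    (hw : w ≠ 0) (t : ℝ) (h : A *ᵥ (fun i => w i) = t • (fun i => w i)) : |t| ≤ ‖A‖ := by
  have h1 : ‖wr (A *ᵥ (fun i => w i))‖ ≤ ‖A‖ * ‖w‖ := norm_wr_mulVec_le A w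
  rw [h, norm_smul_wr, wr_uw] at h1
  have hw' : 0 < ‖w‖ := norm_pos_iff.mpr hw
  calc |t| = |t| * ‖w‖ / ‖w‖ := by field_simp
  _ ≤ ‖A‖ * ‖w‖ / ‖w‖ := by gcongr
  _ = ‖A‖ := by field_simp

lemma realCT (A : Matrix (Fin m) (Fin n) ℝ) : Aᴴ = Aᵀ := by
  ext i j; simp [conjTranspose_apply]

lemma mulVec_diagonal' (v : Fin n → ℝ) (x : Fin n → ℝ) (i : Fin n) :
    (Matrix.diagonal v *ᵥ x) i = v i * x i := by
  simp [mulVec, diagonal, dotProduct, Finset.sum_ite_eq]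

lemma diag_norm_le (v : Fin n → ℝ) {c : ℝ} (hc : 0 ≤ c) (h : ∀ i, |v i| ≤ c) :
    ‖(Matrix.diagonal v : Matrix (Fin n) (Fin n) ℝ)‖ ≤ c := by
  rw [Matrix.l2_opNorm_def]
  apply ContinuousLinearMap.opNorm_le_bound _ hc
  intro x
  have hx : (LinearEquiv.trans Matrix.toEuclideanLin LinearMap.toContinuousLinearMap)
      (Matrix.diagonal v) x = wr (Matrix.diagonal v *ᵥ (fun i => x i)) := rfl
  rw [hx, norm_wr]
  have hxn : ‖x‖ = Real.sqrt (∑ i, (x i)^2) := norm_wr (fun i => x i)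
  rw [hxn, ← Real.sqrt_sq hc, ← Real.sqrt_mul (by positivity)]
  apply Real.sqrt_le_sqrt
  rw [Finset.mul_sum]
  apply Finset.sum_le_sum
  intro i _
  rw [mulVec_diagonal']
  have := h i
  have h2 : (v i)^2 ≤ c^2 := by nlinarith [abs_nonneg (v i), sq_abs (v i)]
  nlinarith [sq_nonneg (x i), sq_nonneg (v i * x i), mul_pow (v i) (x i) 2]

lemma norm_one_le_one : ‖(1 : Matrix (Fin n) (Fin n) ℝ)‖ ≤ 1 := by
  have : (1 : Matrix (Fin n) (Fin n) ℝ) = Matrix.diagonal (fun _ => 1) := by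
    simp [Matrix.diagonal_one]
  rw [this]
  exact diag_norm_le _ zero_le_one (fun i => by simp)

lemma orth_norm_le_one (A : Matrix (Fin m) (Fin n) ℝ) (h : Aᵀ * A = 1) : ‖A‖ ≤ 1 := by
  have h2 : ‖Aᴴ * A‖ = ‖A‖ * ‖A‖ := Matrix.l2_opNorm_conjTranspose_mul_self A
  rw [realCT, h] at h2
  have h3 : ‖A‖ * ‖A‖ ≤ 1 := h2 ▸ norm_one_le_one
  nlinarith [norm_nonneg A]

/-- isometry for matrices with orthonormal columns -/
lemma norm_wr_mulVec_orth (A : Matrix (Fin m) (Fin n) ℝ) (h : Aᵀ * A = 1) (v : Fin n → ℝ) :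
    ‖wr (A *ᵥ v)‖ = ‖wr v‖ := by
  rw [norm_wr, norm_wr]
  have h2 : (∑ i, ((A *ᵥ v) i)^2) = (A *ᵥ v) ⬝ᵥ (A *ᵥ v) := by simp [dotProduct, sq]
  have h3 : (∑ i, (v i)^2) = v ⬝ᵥ v := by simp [dotProduct, sq]
  have h4 : (A *ᵥ v) ᵥ* A = Aᵀ *ᵥ (A *ᵥ v) := by rw [Matrix.mulVec_transpose]
  rw [h2, h3, Matrix.dotProduct_mulVec, h4, Matrix.mulVec_mulVec, h, Matrix.one_mulVec]

lemma weyl_bound {n d : ℕ} (hd : d ≤ n)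
    (E : Matrix (Fin n) (Fin n) ℝ)
    (V : Matrix (Fin n) (Fin d) ℝ) (γ : Fin d → ℝ)
    (hV : Vᵀ * V = 1)
    (gmin : ℝ) (hgmin : ∀ i, gmin ≤ |γ i|) (hg0 : 0 ≤ gmin)
    (W : Matrix (Fin n) (Fin n) ℝ) (μ : Fin n → ℝ)
    (hW : Wᵀ * W = 1)
    (hZE : V * Matrix.diagonal γ * Vᵀ + E = W * Matrix.diagonal μ * Wᵀ)
    (hsorted : ∀ i j : Fin n, i ≤ j → |μ j| ≤ |μ i|)
    (kk : Fin d) : gmin - ‖E‖ ≤ |μ (Fin.castLE hd kk)| := by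
  by_contra hcon
  push_neg at hcon
  set k0 : Fin n := Fin.castLE hd kk with hk0
  set c : ℝ := gmin - ‖E‖ with hc
  have hisoV : ∀ y : EuclideanSpace ℝ (Fin d), ‖Matrix.toEuclideanLin V y‖ = ‖y‖ := by
    intro y
    rw [Matrix.toEuclideanLin_apply]
    exact norm_wr_mulVec_orth V hV _
  have hVinj : Function.Injective (Matrix.toEuclideanLin V) := by
    intro a b hab
    have : ‖Matrix.toEuclideanLin V (a - b)‖ = ‖a - b‖ := hisoV _
    rw [map_sub, hab, sub_self, norm_zero] at this
    exact sub_eq_zero.mp (norm_eq_zero.mp this.symm)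
  have hisoW : ∀ y : EuclideanSpace ℝ (Fin n), ‖Matrix.toEuclideanLin W y‖ = ‖y‖ := by
    intro y
    rw [Matrix.toEuclideanLin_apply]
    exact norm_wr_mulVec_orth W hW _
  have hWinj : Function.Injective (Matrix.toEuclideanLin W) := by
    intro a b hab
    have : ‖Matrix.toEuclideanLin W (a - b)‖ = ‖a - b‖ := hisoW _
    rw [map_sub, hab, sub_self, norm_zero] at this
    exact sub_eq_zero.mp (norm_eq_zero.mp this.symm)
  set U : Submodule ℝ (EuclideanSpace ℝ (Fin n)) := LinearMap.range (Matrix.toEuclideanLin V)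
  have hU : Module.finrank ℝ U = d := by
    rw [LinearMap.finrank_range_of_inj hVinj, finrank_euclideanSpace_fin]
  set fam : {j : Fin n // k0 ≤ j} → EuclideanSpace ℝ (Fin n) :=
    fun j => EuclideanSpace.single j.1 (1:ℝ) with hfam
  have hli : LinearIndependent ℝ fam := by
    have hb := (EuclideanSpace.basisFun (Fin n) ℝ).toBasis.linearIndependent
    have : fam = (fun i => (EuclideanSpace.basisFun (Fin n) ℝ).toBasis i) ∘ Subtype.val := by
      funext j; simp [hfam, EuclideanSpace.basisFun_apply]
    rw [this]
    exact hb.comp _ Subtype.val_injective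
  set S : Submodule ℝ (EuclideanSpace ℝ (Fin n)) := Submodule.span ℝ (Set.range fam)
  have hcard : Fintype.card {j : Fin n // k0 ≤ j} = n - k0.val := by
    have h1 : Fintype.card {j : Fin n // k0 ≤ j} = (Finset.Ici k0).card := by
      rw [Fintype.card_subtype]
      congr 1
      ext j
      simp [Finset.mem_Ici]
    rw [h1, Fin.card_Ici]
  have hS : Module.finrank ℝ S = n - k0.val := by
    rw [finrank_span_eq_card hli, hcard]
  set T : Submodule ℝ (EuclideanSpace ℝ (Fin n)) :=
    S.map (Matrix.toEuclideanLin W : EuclideanSpace ℝ (Fin n) →ₗ[ℝ] EuclideanSpace ℝ (Fin n))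
  have hT : Module.finrank ℝ T = n - k0.val := by
    rw [← hS]
    exact (Submodule.equivMapOfInjective _ hWinj S).finrank_eq.symm
  have hsum := Submodule.finrank_sup_add_finrank_inf_eq U T
  have hle : Module.finrank ℝ ↥(U ⊔ T) ≤ n := by
    have := Submodule.finrank_le (U ⊔ T)
    rwa [finrank_euclideanSpace_fin] at this
  have hk0d : (k0 : ℕ) < d := kk.2
  have hpos : 0 < Module.finrank ℝ ↥(U ⊓ T) := by omega
  have hne : (U ⊓ T) ≠ ⊥ := by
    intro hbot
    rw [hbot] at hpos
    simp [finrank_bot] at hpos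
  obtain ⟨x, hxUT, hxne⟩ := Submodule.exists_mem_ne_zero_of_ne_bot hne
  have hxU : x ∈ U := hxUT.1
  have hxT : x ∈ T := hxUT.2
  have hxpos : (0:ℝ) < ‖x‖ := norm_pos_iff.mpr hxne
  obtain ⟨y, hy⟩ := hxU
  have hxw : x = wr (V *ᵥ (fun i => y i)) := by
    rw [← hy, Matrix.toEuclideanLin_apply]; rfl
  have hnx : ‖x‖ = ‖wr (fun i => y i)‖ := by
    rw [hxw, norm_wr_mulVec_orth V hV]
  have hVty : Vᵀ *ᵥ (V *ᵥ (fun i => y i)) = (fun i => y i) := by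
    rw [Matrix.mulVec_mulVec, hV, Matrix.one_mulVec]
  have hZx : (V * Matrix.diagonal γ * Vᵀ) *ᵥ (fun i => x i)
      = V *ᵥ (Matrix.diagonal γ *ᵥ (fun i => y i)) := by
    have hxf : (fun i => x i) = V *ᵥ (fun i => y i) := by rw [hxw]; rfl
    rw [hxf, ← Matrix.mulVec_mulVec, hVty, Matrix.mulVec_mulVec]
  have hlow : c * ‖x‖ ≤ ‖wr ((V * Matrix.diagonal γ * Vᵀ + E) *ᵥ (fun i => x i))‖ := by
    have hZlow : gmin * ‖x‖ ≤ ‖wr ((V * Matrix.diagonal γ * Vᵀ) *ᵥ (fun i => x i))‖ := by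
      rw [hZx, norm_wr_mulVec_orth V hV]
      have h1 : ‖wr (gmin • (fun i => y i))‖ ≤ ‖wr (Matrix.diagonal γ *ᵥ (fun i => y i))‖ := by
        apply norm_wr_le_of_sq_le
        intro i
        have hdiag : (Matrix.diagonal γ *ᵥ (fun i => y i)) i = γ i * y i := by
          simp [mulVec, diagonal, dotProduct, Finset.sum_ite_eq]
        rw [hdiag]
        have := hgmin i
        have : gmin^2 ≤ (γ i)^2 := by nlinarith [abs_nonneg (γ i), sq_abs (γ i)]
        simp only [Pi.smul_apply, smul_eq_mul]
        nlinarith [sq_nonneg (y i)]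
      rw [norm_smul_wr, abs_of_nonneg hg0] at h1
      rw [hnx]
      exact h1
    have hEup : ‖wr (E *ᵥ (fun i => x i))‖ ≤ ‖E‖ * ‖x‖ := norm_wr_mulVec_le E x
    have hadd : wr ((V * Matrix.diagonal γ * Vᵀ + E) *ᵥ (fun i => x i))
        = wr ((V * Matrix.diagonal γ * Vᵀ) *ᵥ (fun i => x i)) + wr (E *ᵥ (fun i => x i)) := by
      rw [Matrix.add_mulVec]; rfl
    have htri : ‖wr ((V * Matrix.diagonal γ * Vᵀ) *ᵥ (fun i => x i))‖
        ≤ ‖wr ((V * Matrix.diagonal γ * Vᵀ + E) *ᵥ (fun i => x i))‖ + ‖wr (E *ᵥ (fun i => x i))‖ := by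
      rw [hadd]
      have := norm_add_le (wr ((V * Matrix.diagonal γ * Vᵀ) *ᵥ fun i => x i) + wr (E *ᵥ fun i => x i))
        (- wr (E *ᵥ fun i => x i))
      simpa using this
    rw [hc]
    linarith
  obtain ⟨s, hsS, hsx⟩ := hxT
  have hcoordall : ∀ z, ∀ _hz : z ∈ Submodule.span ℝ (Set.range fam),
      ∀ j : Fin n, j < k0 → z j = 0 := by
    intro z hz j hj
    induction hz using Submodule.span_induction with
    | mem z hz =>
      obtain ⟨j', hj'⟩ := hz
      rw [← hj']
      simp only [hfam, EuclideanSpace.single_apply]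
      have : j ≠ j'.1 := by
        intro hjj
        exact absurd (hjj ▸ j'.2) (not_le.mpr hj)
      simp [this]
    | zero => rfl
    | add a b _ _ ha hb => show a j + b j = 0; rw [ha, hb, add_zero]
    | smul t a _ ha => show t * a j = 0; rw [ha, mul_zero]
  have hcoord : ∀ j : Fin n, j < k0 → s j = 0 := hcoordall s hsS
  have hxs : x = wr (W *ᵥ (fun i => s i)) := by
    rw [← hsx, Matrix.toEuclideanLin_apply]; rfl
  have hnxs : ‖x‖ = ‖wr (fun i => s i)‖ := by rw [hxs, norm_wr_mulVec_orth W hW]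
  have hWts : Wᵀ *ᵥ (W *ᵥ (fun i => s i)) = (fun i => s i) := by
    rw [Matrix.mulVec_mulVec, hW, Matrix.one_mulVec]
  have hZEx : (V * Matrix.diagonal γ * Vᵀ + E) *ᵥ (fun i => x i)
      = W *ᵥ (Matrix.diagonal μ *ᵥ (fun i => s i)) := by
    have hxf : (fun i => x i) = W *ᵥ (fun i => s i) := by rw [hxs]; rfl
    rw [hZE, hxf, ← Matrix.mulVec_mulVec, ← Matrix.mulVec_mulVec, hWts, Matrix.mulVec_mulVec]
  have hup : ‖wr ((V * Matrix.diagonal γ * Vᵀ + E) *ᵥ (fun i => x i))‖ ≤ |μ k0| * ‖x‖ := by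
    rw [hZEx, norm_wr_mulVec_orth W hW]
    have h1 : ‖wr (Matrix.diagonal μ *ᵥ (fun i => s i))‖ ≤ ‖wr (|μ k0| • (fun i => s i))‖ := by
      apply norm_wr_le_of_sq_le
      intro i
      have hdiag : (Matrix.diagonal μ *ᵥ (fun i => s i)) i = μ i * s i := by
        simp [mulVec, diagonal, dotProduct, Finset.sum_ite_eq]
      rw [hdiag]
      simp only [Pi.smul_apply, smul_eq_mul]
      by_cases hik : i < k0
      · rw [hcoord i hik]
        simp
      · have hile : k0 ≤ i := not_lt.mp hik
        have := hsorted k0 i hile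
        have h2 : (μ i)^2 ≤ (μ k0)^2 := by nlinarith [abs_nonneg (μ i), sq_abs (μ i), sq_abs (μ k0)]
        have h3 : (|μ k0|)^2 = (μ k0)^2 := sq_abs _
        nlinarith [sq_nonneg (s i)]
    rw [norm_smul_wr, abs_abs] at h1
    rw [hnxs]
    exact h1
  have : c * ‖x‖ ≤ |μ k0| * ‖x‖ := le_trans hlow hup
  nlinarith

end STAux

open STAux in
/-- Cai–Zhang type sin-theta bound.  Let `Z` be symmetric of rank `d` with eigendecomposition
`Z = V·diag(γ)·Vᵀ` (`V ∈ ℝ^{n×d}` orthonormal, all `γᵢ ≠ 0`), let `gmin = |γ_d(Z)|` be the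
smallest nonzero eigenvalue magnitude, and let `E` be symmetric with `gmin > 3‖E‖₂`.
If `Z + E = W·diag(μ)·Wᵀ` with `W` orthogonal and `|μ|` sorted in decreasing order, so the
first `d` columns of `W` are the top-`d` eigenvectors `Ṽ` of `Z + E`, then
`‖sin Θ(V, Ṽ)‖₂ ≤ ‖E‖₂ / (gmin - 3‖E‖₂)`. -/
theorem sinTheta_perturbation_bound {n d : ℕ} (hd : d ≤ n)
    (Z E : Matrix (Fin n) (Fin n) ℝ) (hZ : Z.IsSymm) (hE : E.IsSymm)
    (V : Matrix (Fin n) (Fin d) ℝ) (γ : Fin d → ℝ)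
    (hV : Vᵀ * V = 1) (hZdecomp : Z = V * Matrix.diagonal γ * Vᵀ)
    (hγ : ∀ i, γ i ≠ 0) (hrank : Z.rank = d)
    (gmin : ℝ) (hgmin : ∀ i, gmin ≤ |γ i|) (hgmin' : ∃ i, gmin = |γ i|)
    (hgap : 3 * opNorm E < gmin)
    (W : Matrix (Fin n) (Fin n) ℝ) (μ : Fin n → ℝ)
    (hW : Wᵀ * W = 1) (hW' : W * Wᵀ = 1)
    (hZE : Z + E = W * Matrix.diagonal μ * Wᵀ)
    (hsorted : ∀ i j : Fin n, i ≤ j → |μ j| ≤ |μ i|) :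
    opNorm (sinTheta V (W.submatrix id (Fin.castLE hd)))
      ≤ opNorm E / (gmin - 3 * opNorm E) := by
  classical
  have hopE : opNorm E = ‖E‖ := rfl
  rw [hopE] at hgap ⊢
  have hEnn : (0:ℝ) ≤ ‖E‖ := norm_nonneg _
  have hg0 : (0:ℝ) ≤ gmin := by linarith
  have hgpos : (0:ℝ) < gmin - 3 * ‖E‖ := by linarith
  set Vt : Matrix (Fin n) (Fin d) ℝ := W.submatrix id (Fin.castLE hd) with hVtdef
  -- Vt has orthonormal columns
  have hVt : Vtᵀ * Vt = 1 := by
    ext i j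
    have h := congrFun (congrFun hW (Fin.castLE hd i)) (Fin.castLE hd j)
    simp only [Matrix.mul_apply, Matrix.transpose_apply, Matrix.submatrix_apply, id_eq,
      hVtdef] at h ⊢
    rw [h]
    have hcast : (Fin.castLE hd i = Fin.castLE hd j) ↔ i = j := by
      constructor
      · intro hcc; exact Fin.ext (by simpa using congrArg Fin.val hcc)
      · intro hcc; rw [hcc]
    by_cases hij : i = j
    · simp [Matrix.one_apply, hij]
    · simp [Matrix.one_apply, hij, hcast]
  -- projection
  set P : Matrix (Fin n) (Fin n) ℝ := 1 - V * Vᵀ with hPdef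
  have hAA : (V * Vᵀ) * (V * Vᵀ) = V * Vᵀ := by
    rw [Matrix.mul_assoc, ← Matrix.mul_assoc Vᵀ V Vᵀ, hV, Matrix.one_mul]
  have hPt : Pᵀ = P := by
    rw [hPdef]
    rw [Matrix.transpose_sub, Matrix.transpose_one, Matrix.transpose_mul,
      Matrix.transpose_transpose]
  have hPP : P * P = P := by
    rw [hPdef, Matrix.mul_sub, Matrix.mul_one, Matrix.sub_mul, Matrix.one_mul, hAA]
    abel
  have hPn : ‖P‖ ≤ 1 := by
    have h2 : ‖Pᴴ * P‖ = ‖P‖ * ‖P‖ := Matrix.l2_opNorm_conjTranspose_mul_self P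
    rw [realCT, hPt, hPP] at h2
    nlinarith [norm_nonneg P]
  have hPV : P * V = 0 := by
    rw [hPdef, Matrix.sub_mul, Matrix.one_mul, Matrix.mul_assoc, hV, Matrix.mul_one, sub_self]
  have hPZ : P * Z = 0 := by
    rw [hZdecomp, ← Matrix.mul_assoc, ← Matrix.mul_assoc, hPV, Matrix.zero_mul, Matrix.zero_mul]
  -- (Z+E) Vt = Vt M₁
  set M₁ : Matrix (Fin d) (Fin d) ℝ := Matrix.diagonal (fun i => μ (Fin.castLE hd i)) with hM₁def
  have hWmul : (Z + E) * W = W * Matrix.diagonal μ := by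
    rw [hZE, Matrix.mul_assoc (W * Matrix.diagonal μ) Wᵀ W, hW, Matrix.mul_one]
  have hVtmul : (Z + E) * Vt = Vt * M₁ := by
    ext i j
    have h1 : ((Z + E) * Vt) i j = ((Z + E) * W) i (Fin.castLE hd j) := by
      simp [Matrix.mul_apply, hVtdef]
    rw [Matrix.mul_diagonal, h1, hWmul, Matrix.mul_diagonal]
    rfl
  have hkey : (P * Vt) * M₁ = P * (E * Vt) := by
    rw [Matrix.mul_assoc, ← hVtmul, Matrix.add_mul, Matrix.mul_add,
      ← Matrix.mul_assoc P Z Vt, hPZ, Matrix.zero_mul, zero_add]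
  -- Weyl bound
  have hmu : ∀ i : Fin d, gmin - ‖E‖ ≤ |μ (Fin.castLE hd i)| := by
    intro i
    refine weyl_bound hd E V γ hV gmin hgmin hg0 W μ hW ?_ hsorted i
    rw [← hZdecomp]; exact hZE
  have hm : (0:ℝ) < gmin - ‖E‖ := by linarith
  have hμne : ∀ i : Fin d, μ (Fin.castLE hd i) ≠ 0 := by
    intro i
    have := hmu i
    intro h0
    rw [h0, abs_zero] at this
    linarith
  set Minv : Matrix (Fin d) (Fin d) ℝ :=
    Matrix.diagonal (fun i => (μ (Fin.castLE hd i))⁻¹) with hMinvdef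
  have hMM : M₁ * Minv = 1 := by
    rw [hM₁def, hMinvdef, Matrix.diagonal_mul_diagonal]
    have : (fun i => μ (Fin.castLE hd i) * (μ (Fin.castLE hd i))⁻¹) = fun _ : Fin d => (1:ℝ) :=
      funext fun i => mul_inv_cancel₀ (hμne i)
    rw [this, Matrix.diagonal_one]
  have hMinvn : ‖Minv‖ ≤ (gmin - ‖E‖)⁻¹ := by
    apply diag_norm_le _ (inv_nonneg.mpr hm.le)
    intro i
    rw [abs_inv]
    exact inv_anti₀ hm (hmu i)
  have hVtn : ‖Vt‖ ≤ 1 := orth_norm_le_one Vt hVt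
  -- bound ‖P * Vt‖
  have hPVt : ‖P * Vt‖ ≤ ‖E‖ / (gmin - ‖E‖) := by
    have c1 : ‖P * (E * Vt)‖ ≤ ‖E‖ := by
      have d1 : ‖E * Vt‖ ≤ ‖E‖ * ‖Vt‖ := Matrix.l2_opNorm_mul E Vt
      have d2 : ‖P * (E * Vt)‖ ≤ ‖P‖ * ‖E * Vt‖ := Matrix.l2_opNorm_mul P (E * Vt)
      nlinarith [norm_nonneg (E * Vt), norm_nonneg P, norm_nonneg E, norm_nonneg Vt]
    calc ‖P * Vt‖ = ‖(P * Vt * M₁) * Minv‖ := by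
          rw [Matrix.mul_assoc, hMM, Matrix.mul_one]
      _ ≤ ‖P * Vt * M₁‖ * ‖Minv‖ := Matrix.l2_opNorm_mul _ _
      _ = ‖P * (E * Vt)‖ * ‖Minv‖ := by rw [hkey]
      _ ≤ ‖E‖ * (gmin - ‖E‖)⁻¹ := by
          apply mul_le_mul c1 hMinvn (norm_nonneg _) hEnn
      _ = ‖E‖ / (gmin - ‖E‖) := by rw [div_eq_mul_inv]
  -- relate sinTheta entries to ‖P * Vt‖
  set G : Matrix (Fin d) (Fin d) ℝ := (Vᵀ * Vt)ᵀ * (Vᵀ * Vt) with hGdef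
  have hG : G.IsHermitian := by
    have := Matrix.isHermitian_conjTranspose_mul_self (Vᵀ * Vt)
    rwa [realCT] at this
  have hlam0 : ∀ i, 0 ≤ hG.eigenvalues i := by
    intro i
    have hpsd : G.PosSemidef := by
      have := Matrix.posSemidef_conjTranspose_mul_self (Vᵀ * Vt)
      rwa [realCT] at this
    exact hpsd.eigenvalues_nonneg i
  have h1G : Vtᵀ * (P * Vt) = 1 - G := by
    have hexp : P * Vt = Vt - V * (Vᵀ * Vt) := by
      rw [hPdef, Matrix.sub_mul, Matrix.one_mul, Matrix.mul_assoc]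
    rw [hexp, Matrix.mul_sub, hVt, hGdef, Matrix.transpose_mul, Matrix.transpose_transpose,
      ← Matrix.mul_assoc]
  have hnrm1G : ‖(1 : Matrix (Fin d) (Fin d) ℝ) - G‖ = ‖P * Vt‖ * ‖P * Vt‖ := by
    rw [← h1G]
    have hCT : Vtᵀ * (P * Vt) = (P * Vt)ᴴ * (P * Vt) := by
      rw [realCT, Matrix.transpose_mul, hPt, Matrix.mul_assoc, ← Matrix.mul_assoc P P Vt, hPP]
    rw [hCT, Matrix.l2_opNorm_conjTranspose_mul_self]
  have heig : ∀ i, 1 - hG.eigenvalues i ≤ ‖P * Vt‖ * ‖P * Vt‖ := by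
    intro i
    have hGv : G *ᵥ (fun j => (hG.eigenvectorBasis i) j)
        = hG.eigenvalues i • (fun j => (hG.eigenvectorBasis i) j) := hG.mulVec_eigenvectorBasis i
    have hv : ((1 : Matrix (Fin d) (Fin d) ℝ) - G) *ᵥ (fun j => (hG.eigenvectorBasis i) j)
        = (1 - hG.eigenvalues i) • (fun j => (hG.eigenvectorBasis i) j) := by
      rw [Matrix.sub_mulVec, Matrix.one_mulVec, hGv, sub_smul, one_smul]
    have habs := abs_le_norm_of_mulVec_eq ((1 : Matrix (Fin d) (Fin d) ℝ) - G)
      (hG.eigenvectorBasis i) (hG.eigenvectorBasis.toBasis.ne_zero i) _ hv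
    rw [hnrm1G] at habs
    have := le_abs_self (1 - hG.eigenvalues i)
    linarith
  -- final bound
  have hfinal : ‖sinTheta V Vt‖ ≤ ‖E‖ / (gmin - ‖E‖) := by
    unfold sinTheta
    apply diag_norm_le _ (div_nonneg hEnn hm.le)
    intro i
    rw [Real.sin_arccos, abs_of_nonneg (Real.sqrt_nonneg _)]
    have hsq : (singvals (Vᵀ * Vt) i)^2 = hG.eigenvalues i := by
      unfold singvals
      exact Real.sq_sqrt (hlam0 i)
    rw [hsq]
    have h1 := heig i
    have hPVtnn : (0:ℝ) ≤ ‖P * Vt‖ := norm_nonneg _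
    calc Real.sqrt (1 - hG.eigenvalues i) ≤ Real.sqrt (‖P * Vt‖ * ‖P * Vt‖) :=
          Real.sqrt_le_sqrt (by linarith)
      _ = ‖P * Vt‖ := Real.sqrt_mul_self hPVtnn
      _ ≤ ‖E‖ / (gmin - ‖E‖) := hPVt
  have hmono : ‖E‖ / (gmin - ‖E‖) ≤ ‖E‖ / (gmin - 3 * ‖E‖) := by
    apply div_le_div_of_nonneg_left hEnn hgpos
    linarith
  calc opNorm (sinTheta V Vt) = ‖sinTheta V Vt‖ := rfl
    _ ≤ ‖E‖ / (gmin - ‖E‖) := hfinal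
    _ ≤ ‖E‖ / (gmin - 3 * ‖E‖) := hmono
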